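/- Let c_k(λ) = w_k/π_k for k ∉ 𝒜 and c_k(λ) = (w_k+λ_k)/π_k for k ∈ 𝒜. Then for any classifier φ, the Lagrangian satisfies the identity F_λ(φ) = −E_X[ c_{φ(X)}(λ) · P(Y = φ(X) | X) ] + Σ_{k=1}^K w_k + Σ_{k∈𝒜} λ_k (1 − α_k). Consequently the classifier φ*_λ(x) = argmax_k { c_k(λ) P(Y=k|X=x) } minimizes F_λ over all classifiers. -/
import Mathlib


open MeasureTheory ProbabilityTheory Set

/-- Lagrangian identity and cost-sensitive minimizer: with costs
`c_k = w_k/π_k` (`k ∉ 𝒜`) and `c_k = (w_k+λ_k)/π_k` (`k ∈ 𝒜`), the NPMC Lagrangian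
satisfies `F_λ(φ) = −E_X[c_{φ(X)} P(Y=φ(X)|X)] + ∑_k w_k + ∑_{k∈𝒜} λ_k(1−α_k)`,
so the posterior-argmax classifier `φ*_λ` minimizes `F_λ`. -/
theorem stmt8
    {𝒳 : Type*} [MeasurableSpace 𝒳] {K : ℕ}
    (μ : Measure (𝒳 × Fin K)) [IsProbabilityMeasure μ]
    (A : Finset (Fin K)) (w α : Fin K → ℝ)
    (hw : ∀ k, 0 ≤ w k) (hα : ∀ k, α k ∈ Set.Ico (0:ℝ) 1)
    (π : Fin K → ℝ) (hπpos : ∀ k, 0 < π k)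
    (hπ : ∀ k : Fin K, π k = (μ (Set.univ ×ˢ ({k} : Set (Fin K)))).toReal)
    (η : 𝒳 → Fin K → ℝ) (hηm : ∀ k, Measurable fun x => η x k)
    (hη0 : ∀ x k, 0 ≤ η x k) (hη1 : ∀ x, ∑ k, η x k = 1)
    (hBayes : ∀ k : Fin K, ∀ s : Set 𝒳, MeasurableSet s →
      (μ (s ×ˢ ({k} : Set (Fin K)))).toReal = ∫ x in s, η x k ∂(μ.map Prod.fst))
    (l : Fin K → ℝ) (hl : ∀ k, 0 ≤ l k)
    (c : Fin K → ℝ)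
    (hcdef : ∀ k, c k = if k ∈ A then (w k + l k) / π k else w k / π k)
    (Rk : (𝒳 → Fin K) → Fin K → ℝ)
    (hRk : ∀ φ k, Rk φ k =
      ((μ[|Set.univ ×ˢ ({k} : Set (Fin K))]) {p : 𝒳 × Fin K | φ p.1 ≠ k}).toReal)
    (F : (𝒳 → Fin K) → ℝ)
    (hFdef : ∀ φ, F φ = ∑ k ∈ Finset.univ \ A, w k * Rk φ k
      + ∑ k ∈ A, (w k + l k) * Rk φ k - ∑ k ∈ A, l k * α k)
    (φs : 𝒳 → Fin K) (hφs : Measurable φs)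
    (hargmax : ∀ x j, c j * η x j ≤ c (φs x) * η x (φs x)) :
    (∀ φ : 𝒳 → Fin K, Measurable φ →
      F φ = -(∫ x, c (φ x) * η x (φ x) ∂(μ.map Prod.fst))
        + ∑ k, w k + ∑ k ∈ A, l k * (1 - α k))
    ∧ ∀ φ : 𝒳 → Fin K, Measurable φ → F φs ≤ F φ := by
  have hν : IsProbabilityMeasure (μ.map (Prod.fst : 𝒳 × Fin K → 𝒳)) :=
    Measure.isProbabilityMeasure_map measurable_fst.aemeasurable
  set ν := μ.map (Prod.fst : 𝒳 × Fin K → 𝒳) with hνdef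
  have hη_le1 : ∀ x k, η x k ≤ 1 := by
    intro x k
    calc η x k ≤ ∑ j, η x j :=
          Finset.single_le_sum (fun j _ => hη0 x j) (Finset.mem_univ k)
      _ = 1 := hη1 x
  have hηint : ∀ k, Integrable (fun x => η x k) ν := by
    intro k
    refine Integrable.mono' (integrable_const 1) (hηm k).aestronglyMeasurable
      (Filter.Eventually.of_forall fun x => ?_)
    rw [Real.norm_eq_abs, abs_of_nonneg (hη0 x k)]
    exact hη_le1 x k
  have hint : ∀ k, Integrable (fun x => c k * η x k) ν := fun k => (hηint k).const_mul _
  have hdecomp : ∀ (φ : 𝒳 → Fin K), (fun x => c (φ x) * η x (φ x))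
      = fun x => ∑ k, ({x | φ x = k}).indicator (fun x => c k * η x k) x := by
    intro φ; funext x
    rw [Finset.sum_eq_single (φ x)]
    · simp [Set.indicator_apply]
    · intro b _ hb
      have hne : ¬ φ x = b := fun h => hb h.symm
      simp [Set.indicator_apply, hne]
    · simp
  have hmeas : ∀ (φ : 𝒳 → Fin K), Measurable φ → ∀ k : Fin K,
      MeasurableSet {x | φ x = k} := fun φ hφ k => hφ (measurableSet_singleton k)
  have hintφ : ∀ φ : 𝒳 → Fin K, Measurable φ →
      Integrable (fun x => c (φ x) * η x (φ x)) ν := by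
    intro φ hφ
    rw [hdecomp φ]
    exact integrable_finset_sum _ fun k _ => (hint k).indicator (hmeas φ hφ k)
  have hintegral : ∀ φ : 𝒳 → Fin K, Measurable φ →
      ∫ x, c (φ x) * η x (φ x) ∂ν = ∑ k, ∫ x in {x | φ x = k}, c k * η x k ∂ν := by
    intro φ hφ
    rw [hdecomp φ,
      integral_finset_sum _ fun k _ => (hint k).indicator (hmeas φ hφ k)]
    exact Finset.sum_congr rfl fun k _ => integral_indicator (hmeas φ hφ k)
  have hηtotal : ∀ k, ∫ x, η x k ∂ν = π k := by
    intro k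
    rw [hπ k, hBayes k Set.univ MeasurableSet.univ, Measure.restrict_univ]
  have hRkπ : ∀ (φ : 𝒳 → Fin K), Measurable φ → ∀ k,
      π k * Rk φ k = π k - ∫ x in {x | φ x = k}, η x k ∂ν := by
    intro φ hφ k
    have hs : MeasurableSet (Set.univ ×ˢ ({k} : Set (Fin K))) :=
      (MeasurableSet.univ : MeasurableSet (Set.univ : Set 𝒳)).prod (measurableSet_singleton k)
    have hμs : (μ (Set.univ ×ˢ ({k} : Set (Fin K)))).toReal = π k := (hπ k).symm
    have hsinter : Set.univ ×ˢ ({k} : Set (Fin K)) ∩ {p : 𝒳 × Fin K | φ p.1 ≠ k}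
        = {x | φ x = k}ᶜ ×ˢ ({k} : Set (Fin K)) := by
      ext ⟨x, y⟩
      simp only [Set.mem_inter_iff, Set.mem_prod, Set.mem_univ, Set.mem_singleton_iff,
        Set.mem_setOf_eq, Set.mem_compl_iff, true_and]
      tauto
    have hcompl : MeasurableSet ({x | φ x = k}ᶜ) := (hmeas φ hφ k).compl
    have hRkeq : Rk φ k = (π k)⁻¹ * ∫ x in {x | φ x = k}ᶜ, η x k ∂ν := by
      rw [hRk, cond_apply hs μ, hsinter, ENNReal.toReal_mul, ENNReal.toReal_inv, hμs,
        hBayes k _ hcompl]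
    have hsplit : ∫ x in {x | φ x = k}ᶜ, η x k ∂ν
        = π k - ∫ x in {x | φ x = k}, η x k ∂ν := by
      have h := integral_add_compl (hmeas φ hφ k) (hηint k)
      rw [hηtotal k] at h
      linarith
    rw [hRkeq, ← mul_assoc, mul_inv_cancel₀ (hπpos k).ne', one_mul, hsplit]
  have hcπ : ∀ k, c k * π k = if k ∈ A then w k + l k else w k := by
    intro k
    rw [hcdef k]
    split <;> exact div_mul_cancel₀ _ (hπpos k).ne'
  have hmain : ∀ φ : 𝒳 → Fin K, Measurable φ →
      F φ = -(∫ x, c (φ x) * η x (φ x) ∂ν)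
        + ∑ k, w k + ∑ k ∈ A, l k * (1 - α k) := by
    intro φ hφ
    have h1 : ∑ k ∈ Finset.univ \ A, w k * Rk φ k + ∑ k ∈ A, (w k + l k) * Rk φ k
        = ∑ k, c k * (π k * Rk φ k) := by
      have hterm : ∀ k : Fin K, c k * (π k * Rk φ k)
          = (if k ∈ A then w k + l k else w k) * Rk φ k := by
        intro k; rw [← mul_assoc, hcπ k]
      rw [Finset.sum_congr rfl fun k _ => hterm k,
        ← Finset.sum_sdiff (Finset.subset_univ A)]
      congr 1
      · exact Finset.sum_congr rfl fun k hk => by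
          rw [if_neg (Finset.mem_sdiff.1 hk).2]
      · exact Finset.sum_congr rfl fun k hk => by rw [if_pos hk]
    have h2 : ∑ k, c k * (π k * Rk φ k)
        = ∑ k, c k * π k - ∫ x, c (φ x) * η x (φ x) ∂ν := by
      rw [hintegral φ hφ, ← Finset.sum_sub_distrib]
      refine Finset.sum_congr rfl fun k _ => ?_
      rw [hRkπ φ hφ k, mul_sub, integral_const_mul _ _]
    have h3 : ∑ k, c k * π k = ∑ k, w k + ∑ k ∈ A, l k := by
      have : ∑ k, c k * π k
          = ∑ k ∈ Finset.univ \ A, w k + ∑ k ∈ A, (w k + l k) := by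
        rw [Finset.sum_congr rfl fun k (_ : k ∈ Finset.univ) => hcπ k,
          ← Finset.sum_sdiff (Finset.subset_univ A)]
        congr 1
        · exact Finset.sum_congr rfl fun k hk => by
            rw [if_neg (Finset.mem_sdiff.1 hk).2]
        · exact Finset.sum_congr rfl fun k hk => by rw [if_pos hk]
      rw [this, Finset.sum_add_distrib, ← add_assoc,
        Finset.sum_sdiff (Finset.subset_univ A)]
    have h4 : ∑ k ∈ A, l k * (1 - α k) = ∑ k ∈ A, l k - ∑ k ∈ A, l k * α k := by
      rw [← Finset.sum_sub_distrib]
      exact Finset.sum_congr rfl fun k _ => by ring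
    rw [hFdef φ, h1, h2, h3, h4]
    ring
  refine ⟨hmain, ?_⟩
  intro φ hφ
  rw [hmain φ hφ, hmain φs hφs]
  have hmono := integral_mono (hintφ φ hφ) (hintφ φs hφs) fun x => hargmax x (φ x)
  linarith
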